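/- Let u = (i,j) and v = (i,j') be two inner vertices of the extended grid in the same row with j < j', and suppose the inner-vertex generators satisfy the relations: same row uv = q vu; same column (u above v) vu = q uv; otherwise commuting. Then for the weights w(i,j) and w(i,j') defined as ratios w(i,j) = B^{-1}A, w(i,j') = D^{-1}C of invertible elements A, B, C, D satisfying AC = q^{c1}CA, AD = q^{c2}DA, BC = q^{c3}CB, BD = q^{c4}DB with c1 − c2 − c3 + c4 = 1, one has w(i,j)·w(i,j') = q · w(i,j')·w(i,j). -/
import Mathlib


/-- for weights `w(i,j) = B⁻¹A` and `w(i,j') = D⁻¹C` of two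
inner vertices in the same row (`j < j'`), built from invertible elements
`A, B, C, D` satisfying `AC = q^{c₁}CA`, `AD = q^{c₂}DA`, `BC = q^{c₃}CB`,
`BD = q^{c₄}DB` with `c₁ − c₂ − c₃ + c₄ = 1`, one has
`w(i,j)·w(i,j') = q·w(i,j')·w(i,j)`. -/
theorem stmt17 {M : Type*} [Monoid M] (q A B C D : Mˣ)
    (hq : ∀ x : M, (q : M) * x = x * (q : M))
    (i j j' : ℕ) (hjj' : j < j')
    (c1 c2 c3 c4 : ℤ)
    (h1 : A * C = q ^ c1 * (C * A))
    (h2 : A * D = q ^ c2 * (D * A))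
    (h3 : B * C = q ^ c3 * (C * B))
    (h4 : B * D = q ^ c4 * (D * B))
    (hc : c1 - c2 - c3 + c4 = 1)
    (w : ℕ × ℕ → Mˣ)
    (hw : w (i, j) = B⁻¹ * A) (hw' : w (i, j') = D⁻¹ * C) :
    w (i, j) * w (i, j') = q * (w (i, j') * w (i, j)) := by
  have hqc : ∀ u : Mˣ, Commute q u := fun u => Units.ext (hq u)
  -- pull powers of q to the left
  have hpull : ∀ (n : ℤ) (u v : Mˣ), u * (q ^ n * v) = q ^ n * (u * v) := by
    intro n u v
    rw [← mul_assoc, ← ((hqc u).zpow_left n).eq, mul_assoc]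
  -- combine adjacent powers of q
  have hqq : ∀ (n m : ℤ) (x : Mˣ), q ^ n * (q ^ m * x) = q ^ (n + m) * x := by
    intro n m x
    rw [← mul_assoc, ← zpow_add]
  -- extended (right-associated) form of a commutation relation
  have ext : ∀ (X Y : Mˣ) (n : ℤ), X * Y = q ^ n * (Y * X) →
      ∀ z : Mˣ, X * (Y * z) = q ^ n * (Y * (X * z)) := by
    intro X Y n h z
    rw [← mul_assoc, h, mul_assoc, mul_assoc]
  -- commute with left inverse
  have inv_left : ∀ (X Y : Mˣ) (n : ℤ), X * Y = q ^ n * (Y * X) →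
      X⁻¹ * Y = q ^ (-n) * (Y * X⁻¹) := by
    intro X Y n h
    have h' : Y * X = q ^ (-n) * (X * Y) := by
      rw [h, hqq, neg_add_cancel, zpow_zero, one_mul]
    calc X⁻¹ * Y = X⁻¹ * (Y * X) * X⁻¹ := by group
      _ = X⁻¹ * (q ^ (-n) * (X * Y)) * X⁻¹ := by rw [h']
      _ = q ^ (-n) * (X⁻¹ * (X * Y) * X⁻¹) := by rw [hpull, mul_assoc]
      _ = q ^ (-n) * (Y * X⁻¹) := by group
  -- commute with right inverse
  have inv_right : ∀ (X Y : Mˣ) (n : ℤ), X * Y = q ^ n * (Y * X) →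
      X * Y⁻¹ = q ^ (-n) * (Y⁻¹ * X) := by
    intro X Y n h
    have h' : Y * X = q ^ (-n) * (X * Y) := by
      rw [h, hqq, neg_add_cancel, zpow_zero, one_mul]
    calc X * Y⁻¹ = Y⁻¹ * (Y * X) * Y⁻¹ := by group
      _ = Y⁻¹ * (q ^ (-n) * (X * Y)) * Y⁻¹ := by rw [h']
      _ = q ^ (-n) * (Y⁻¹ * (X * Y) * Y⁻¹) := by rw [hpull, mul_assoc]
      _ = q ^ (-n) * (Y⁻¹ * X) := by group
  have hAD : A * D⁻¹ = q ^ (-c2) * (D⁻¹ * A) := inv_right A D c2 h2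
  have hBC : B⁻¹ * C = q ^ (-c3) * (C * B⁻¹) := inv_left B C c3 h3
  have hBD : B⁻¹ * D⁻¹ = q ^ c4 * (D⁻¹ * B⁻¹) := by
    have := inv_left B D⁻¹ (-c4) (inv_right B D c4 h4)
    rwa [neg_neg] at this
  rw [hw, hw']
  simp only [mul_assoc]
  rw [ext A D⁻¹ (-c2) hAD C, hpull, h1, hpull, hpull,
    ext B⁻¹ D⁻¹ c4 hBD (C * A), hpull, hpull,
    ext B⁻¹ C (-c3) hBC A, hqq, hqq, hpull (-c3) D⁻¹ (C * (B⁻¹ * A)), hqq,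
    show -c2 + c1 + c4 + -c3 = (1 : ℤ) by omega, zpow_one]
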